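/- Let G be a finite group acting transitively on a finite nonempty set X, let p be a prime, P a Sylow p-subgroup of G, and N = N_G(P). If x, y ∈ X are such that the N-orbit of x and the N-orbit of y both have cardinality coprime to p, then x and y lie in the same N-orbit. -/

import Mathlib

open MulAction Subgroup

private lemma sylow_le_stabilizer_of_coprime {p : ℕ} [Fact p.Prime] {G : Type*} [Group G]
    [Fintype G] {X : Type*} [Fintype X] [MulAction G X] (P : Sylow p G) (x : X)
    (hx : p.Coprime (Nat.card (MulAction.orbit (Subgroup.normalizer ((P : Subgroup G) : Set G)) x))) :
    (P : Subgroup G) ≤ MulAction.stabilizer G x := by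
  set N := Subgroup.normalizer ((P : Subgroup G) : Set G) with hN
  have hPN : (P : Subgroup G) ≤ N := le_normalizer
  -- the p-group P, viewed inside N, acting on the N-orbit of x, has a fixed point
  have hpgrp : IsPGroup p ((P : Subgroup G).subgroupOf N) :=
    P.2.comap_of_injective N.subtype N.subtype_injective
  have hnotdvd : ¬ p ∣ Nat.card (MulAction.orbit N x) :=
    ((Fact.out : p.Prime).coprime_iff_not_dvd).mp hx
  obtain ⟨z, hz⟩ := hpgrp.nonempty_fixed_point_of_prime_not_dvd_card
    (MulAction.orbit N x) hnotdvd
  -- z is fixed by every element of P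
  have hfix : ∀ g ∈ (P : Subgroup G), g • (z : X) = (z : X) := by
    intro g hg
    have := hz ⟨⟨g, hPN hg⟩, by simpa [Subgroup.mem_subgroupOf] using hg⟩
    exact congrArg Subtype.val this
  obtain ⟨n, hn⟩ := z.2
  intro g hg
  have hg' : (n : G) * g * (n : G)⁻¹ ∈ (P : Subgroup G) := (n.2 g).mp hg
  have : g • x = x := by
    have hx' : x = (n : G)⁻¹ • (z : X) := by
      rw [← hn]; simp [Subgroup.smul_def]
    rw [hx']
    calc g • (n : G)⁻¹ • (z : X) = (n : G)⁻¹ • ((n : G) * g * (n : G)⁻¹) • (z : X) := by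
          simp [smul_smul, mul_assoc]
      _ = (n : G)⁻¹ • (z : X) := by rw [hfix _ hg']
  exact this

/-- If `G` acts transitively on `X` and `x, y ∈ X` have `N = N_G(P)`-orbits of
cardinality coprime to `p`, then `x` and `y` lie in the same `N`-orbit. -/
theorem norbit_eq_of_coprime {p : ℕ} [Fact p.Prime] {G : Type*} [Group G] [Fintype G]
    {X : Type*} [Fintype X] [Nonempty X] [MulAction G X] [MulAction.IsPretransitive G X]
    (P : Sylow p G) (x y : X)
    (hx : p.Coprime (Nat.card (MulAction.orbit (Subgroup.normalizer ((P : Subgroup G) : Set G)) x)))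
    (hy : p.Coprime (Nat.card (MulAction.orbit (Subgroup.normalizer ((P : Subgroup G) : Set G)) y))) :
    MulAction.orbit (Subgroup.normalizer ((P : Subgroup G) : Set G)) x
      = MulAction.orbit (Subgroup.normalizer ((P : Subgroup G) : Set G)) y := by
  have hPx := sylow_le_stabilizer_of_coprime P x hx
  have hPy := sylow_le_stabilizer_of_coprime P y hy
  obtain ⟨g, hg⟩ := MulAction.exists_smul_eq G x y
  set H := MulAction.stabilizer G y with hH
  have h2 : ((g • P : Sylow p G) : Subgroup G) ≤ H := by
    intro a ha
    rw [Sylow.coe_subgroup_smul] at ha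
    obtain ⟨b, hb, rfl⟩ := ha
    have hbx : b • x = x := hPx hb
    show (MulAut.conj g b) • y = y
    simp only [MulAut.conj_apply]
    rw [← hg, smul_smul]
    have e : g * b * g⁻¹ * g = g * b := by group
    rw [e, mul_smul, hbx]
  obtain ⟨h, hh⟩ := MulAction.exists_smul_eq H ((g • P).subtype h2) (P.subtype hPy)
  rw [Sylow.smul_subtype] at hh
  have hsub : ((h • g • P : Sylow p G) : Subgroup G) = (P : Subgroup G) := by
    have := congrArg (fun Q : Sylow p H => (Q : Subgroup H)) hh
    simp only [Sylow.coe_subtype] at this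
    rw [Subgroup.subgroupOf_inj] at this
    rwa [inf_eq_left.mpr (Sylow.smul_le h2 h), inf_eq_left.mpr hPy] at this
  have hmem : (h : G) * g ∈ Subgroup.normalizer ((P : Subgroup G) : Set G) := by
    exact Sylow.smul_eq_iff_mem_normalizer.mp (by rw [mul_smul]; exact Sylow.ext hsub)
  have hy' : y ∈ MulAction.orbit (Subgroup.normalizer ((P : Subgroup G) : Set G)) x := by
    refine ⟨⟨(h : G) * g, hmem⟩, ?_⟩
    show ((h : G) * g) • x = y
    rw [mul_smul, hg]
    exact h.2
  exact (MulAction.orbit_eq_iff.mpr hy').symm
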